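/- arXiv:0804.3071 — 5 statements merged into one kernel-verified Lean document; each statement's English description precedes it below -/
import Mathlib

section
/- The function P^{S,t}_{t+} defined on pairs (X,Y) with X=(x_1<⋯<x_N) ∈ 𝒳^{S,t} and Y=(y_1<⋯<y_N) ∈ 𝒳^{S,t+1} by P^{S,t}_{t+}(X,Y) = [∏_{i<j}(y_j-y_i) · ∏_{i: y_i=x_i+1}(N+S-x_i-1) · ∏_{i: y_i=x_i}(x_i+T-t-S)] / [(T-t)_N · ∏_{i<j}(x_j-x_i)] when y_i - x_i ∈ {0,1} for all i, and 0 otherwise, is a stochastic matrix: for every X ∈ 𝒳^{S,t}, the sum over Y ∈ 𝒳^{S,t+1} of P^{S,t}_{t+}(X,Y) equals 1. -/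
open Finset

/-- Pochhammer symbol (a)_n = a(a+1)⋯(a+n-1) over ℝ. -/
noncomputable def poch (a : ℝ) (n : ℕ) : ℝ := ∏ k ∈ Finset.range n, (a + k)

/-- ∏_{i<j} (f j - f i), as a real number. -/
noncomputable def pairProd {N : ℕ} (f : Fin N → ℤ) : ℝ :=
  ∏ p ∈ Finset.univ.filter (fun p : Fin N × Fin N => p.1 < p.2), ((f p.2 - f p.1 : ℤ) : ℝ)

/-- The section 𝔛^{S,t} as a Finset of ℤ. -/
noncomputable def secX (N T S t : ℕ) : Finset ℤ :=
  Finset.Icc (max 0 ((t : ℤ) + S - T)) (min ((t : ℤ) + N - 1) ((S : ℤ) + N - 1))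

/-- 𝒳^{S,t}: strictly increasing N-tuples with entries in 𝔛^{S,t}. -/
noncomputable def Xcal (N T S t : ℕ) : Finset (Fin N → ℤ) :=
  (Fintype.piFinset fun _ => secX N T S t).filter
    (fun f => ∀ i j : Fin N, i < j → f i < f j)

/-- The stochastic matrix P^{S,t}_{t+}. -/
noncomputable def Ptp (N T S t : ℕ) (X Y : Fin N → ℤ) : ℝ :=
  if ∀ i, Y i = X i ∨ Y i = X i + 1 then
    (pairProd Y *
      ∏ i, (if Y i = X i + 1 then (N : ℝ) + S - X i - 1 else (X i : ℝ) + T - t - S)) /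
      (poch ((T : ℝ) - t) N * pairProd X)
  else 0

/-! ### Auxiliary material -/

noncomputable def uCoef (a b : ℝ) (j k : ℕ) : ℝ :=
  (if j = k then a else 0) + b * (k.choose j) -
    (if 1 ≤ j ∧ j ≤ k then (k.choose (j-1) : ℝ) else 0)

lemma uCoef_tri (a b : ℝ) {j k : ℕ} (h : k < j) : uCoef a b j k = 0 := by
  unfold uCoef
  rw [Nat.choose_eq_zero_of_lt h, if_neg (by omega : ¬ j = k),
    if_neg (by omega : ¬ (1 ≤ j ∧ j ≤ k))]
  simp

lemma uCoef_diag (a b : ℝ) (k : ℕ) : uCoef a b k k = a + b - k := by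
  unfold uCoef
  rcases Nat.eq_zero_or_pos k with rfl | hk
  · simp
  · have h1 : k.choose (k-1) = k := by
      rw [Nat.choose_symm hk, Nat.choose_one_right]
    rw [if_pos rfl, if_pos ⟨hk, le_refl k⟩, h1, Nat.choose_self]
    push_cast; ring

lemma sum_uCoef (a b x : ℝ) {N k : ℕ} (hk : k < N) :
    ∑ j ∈ range N, x ^ j * uCoef a b j k = (x + a) * x ^ k + (b - x) * (x + 1) ^ k := by
  rw [← Finset.sum_subset (Finset.range_subset_range.mpr hk) (fun j _ hj => by
    rw [uCoef_tri a b (by simp at hj ⊢; omega), mul_zero])]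
  unfold uCoef
  have e1 : ∀ j ∈ range (k+1), x ^ j * ((if j = k then a else 0) + b * (k.choose j) -
      (if 1 ≤ j ∧ j ≤ k then (k.choose (j-1) : ℝ) else 0)) =
      (if j = k then a * x ^ k else 0) + b * (k.choose j * x ^ j) -
      (if 1 ≤ j ∧ j ≤ k then (k.choose (j-1) : ℝ) * x ^ j else 0) := by
    intro j hj
    split_ifs with h1 h2 h2 <;> subst_eqs <;> ring
  rw [Finset.sum_congr rfl e1]
  simp only [Finset.sum_sub_distrib, Finset.sum_add_distrib]
  rw [Finset.sum_ite_eq' (range (k+1)) k]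
  have hbin : ∑ j ∈ range (k+1), (k.choose j : ℝ) * x ^ j = (x + 1) ^ k := by
    rw [add_pow]
    exact Finset.sum_congr rfl fun j hj => by ring
  rw [← Finset.mul_sum, hbin]
  have hlast : ∑ j ∈ range (k+1), (if 1 ≤ j ∧ j ≤ k then (k.choose (j-1) : ℝ) * x ^ j else 0)
      = x * ((x + 1) ^ k - x ^ k) := by
    rw [Finset.sum_range_succ']
    simp only [Nat.add_sub_cancel]
    have : ∀ m ∈ range k, (if 1 ≤ m + 1 ∧ m + 1 ≤ k then (k.choose m : ℝ) * x ^ (m+1) else 0)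
        = x * ((k.choose m : ℝ) * x ^ m) := by
      intro m hm
      simp only [mem_range] at hm
      rw [if_pos ⟨by omega, by omega⟩]
      ring
    rw [Finset.sum_congr rfl this, if_neg (by omega), ← Finset.mul_sum]
    have : ∑ m ∈ range k, (k.choose m : ℝ) * x ^ m = (x+1)^k - x^k := by
      have := hbin
      rw [Finset.sum_range_succ, Nat.choose_self] at this
      push_cast at this
      linarith
    rw [this, add_zero]
  rw [hlast]
  simp only [mem_range, hk, if_pos (Nat.lt_succ_self k)]
  ring

lemma det_M (N : ℕ) (a b : ℝ) (x : Fin N → ℝ) :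
    Matrix.det (Matrix.of fun i k : Fin N =>
        (x i + a) * x i ^ (k : ℕ) + (b - x i) * (x i + 1) ^ (k : ℕ))
      = (∏ k ∈ range N, (a + b - k)) * ∏ i : Fin N, ∏ j ∈ Ioi i, (x j - x i) := by
  have hMU : (Matrix.of fun i k : Fin N =>
        (x i + a) * x i ^ (k : ℕ) + (b - x i) * (x i + 1) ^ (k : ℕ))
      = Matrix.vandermonde x * Matrix.of (fun j k : Fin N => uCoef a b j k) := by
    ext i k
    simp only [Matrix.of_apply, Matrix.mul_apply, Matrix.vandermonde_apply]
    rw [Fin.sum_univ_eq_sum_range (fun j => x i ^ j * uCoef a b j k)]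
    exact (sum_uCoef a b (x i) k.2).symm
  have htri : (Matrix.of fun j k : Fin N => uCoef a b j k).BlockTriangular id :=
    fun j k h => uCoef_tri a b h
  rw [hMU, Matrix.det_mul, Matrix.det_vandermonde, Matrix.det_of_upperTriangular htri]
  rw [mul_comm]
  congr 1
  simp only [Matrix.of_apply, uCoef_diag]
  exact Fin.prod_univ_eq_prod_range (fun k => a + b - (k:ℝ)) N

lemma pairProd_eq {N : ℕ} (f : Fin N → ℤ) :
    pairProd f = ∏ i : Fin N, ∏ j ∈ Finset.Ioi i, ((f j : ℝ) - (f i : ℝ)) := by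
  rw [pairProd, Finset.prod_sigma' (Finset.univ) Finset.Ioi
    (fun i j => ((f j : ℝ) - (f i : ℝ)))]
  refine Finset.prod_nbij' (fun p : Fin N × Fin N => (⟨p.1, p.2⟩ : Σ _ : Fin N, Fin N))
    (fun q => (q.1, q.2)) ?_ ?_ ?_ ?_ ?_
  · intro p hp
    simp only [Finset.mem_filter, Finset.mem_univ, true_and] at hp
    simp [Finset.mem_sigma, hp]
  · intro q hq; simp only [Finset.mem_sigma, Finset.mem_Ioi] at hq
    simp [hq.2]
  · intros; rfl
  · intros; rfl
  · intro p hp; push_cast; rfl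

lemma pairProd_pos {N : ℕ} {f : Fin N → ℤ} (h : ∀ i j : Fin N, i < j → f i < f j) :
    0 < pairProd f := by
  rw [pairProd]
  refine Finset.prod_pos fun p hp => ?_
  simp only [Finset.mem_filter, Finset.mem_univ, true_and] at hp
  have h2 : (0:ℤ) < f p.2 - f p.1 := by have := h p.1 p.2 hp; omega
  exact_mod_cast h2

lemma pairProd_zero {N : ℕ} {f : Fin N → ℤ} {i j : Fin N} (hij : i < j) (h : f i = f j) :
    pairProd f = 0 := by
  rw [pairProd]
  refine Finset.prod_eq_zero (i := (i, j)) (by simp [hij]) ?_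
  simp [h]

noncomputable def wgt (N T S t : ℕ) (X : Fin N → ℤ) (i : Fin N) (y : ℤ) : ℝ :=
  if y = X i + 1 then (N : ℝ) + S - X i - 1 else (X i : ℝ) + T - t - S

noncomputable def gfun (N T S t : ℕ) (X Y : Fin N → ℤ) : ℝ :=
  pairProd Y * ∏ i, wgt N T S t X i (Y i)

lemma sum_E (N T S t : ℕ) (X : Fin N → ℤ) :
    ∑ Y ∈ Fintype.piFinset (fun i => ({X i, X i + 1} : Finset ℤ)), gfun N T S t X Y
      = Matrix.det (Matrix.of fun i k : Fin N =>
          ((X i : ℝ) + ((T : ℝ) - t - S)) * (X i : ℝ) ^ (k : ℕ) +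
            (((N : ℝ) + S - 1) - (X i : ℝ)) * ((X i : ℝ) + 1) ^ (k : ℕ)) := by
  have key := (Matrix.detRowAlternating (R := ℝ) (n := Fin N)).toMultilinearMap.map_sum_finset
    (fun i y => fun k : Fin N => wgt N T S t X i y * (y : ℝ) ^ (k : ℕ))
    (fun i => ({X i, X i + 1} : Finset ℤ))
  have hrows : (fun i => ∑ y ∈ ({X i, X i + 1} : Finset ℤ),
        fun k : Fin N => wgt N T S t X i y * (y : ℝ) ^ (k : ℕ))
      = fun i => fun k : Fin N => ((X i : ℝ) + ((T : ℝ) - t - S)) * (X i : ℝ) ^ (k : ℕ) +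
            (((N : ℝ) + S - 1) - (X i : ℝ)) * ((X i : ℝ) + 1) ^ (k : ℕ) := by
    funext i
    rw [Finset.sum_pair (by omega : X i ≠ X i + 1)]
    funext k
    have h1 : wgt N T S t X i (X i) = (X i : ℝ) + ((T : ℝ) - t - S) := by
      rw [wgt, if_neg (by omega)]; ring
    have h2 : wgt N T S t X i (X i + 1) = ((N : ℝ) + S - 1) - (X i : ℝ) := by
      rw [wgt, if_pos rfl]; push_cast; ring
    simp only [Pi.add_apply, h1, h2]
    push_cast
    ring
  rw [hrows] at key
  have hterm : ∀ Y : Fin N → ℤ,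
      (Matrix.detRowAlternating (R := ℝ) (n := Fin N)).toMultilinearMap
        (fun i => fun k : Fin N => wgt N T S t X i (Y i) * ((Y i : ℝ)) ^ (k : ℕ))
      = gfun N T S t X Y := by
    intro Y
    calc (Matrix.detRowAlternating (R := ℝ) (n := Fin N)).toMultilinearMap
          (fun i => fun k : Fin N => wgt N T S t X i (Y i) * ((Y i : ℝ)) ^ (k : ℕ))
        = (∏ i, wgt N T S t X i (Y i)) * (Matrix.vandermonde fun i => (Y i : ℝ)).det :=
          Matrix.det_mul_column _ _
      _ = gfun N T S t X Y := by
          rw [Matrix.det_vandermonde, gfun, pairProd_eq]; ring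
  calc ∑ Y ∈ Fintype.piFinset (fun i => ({X i, X i + 1} : Finset ℤ)), gfun N T S t X Y
      = ∑ Y ∈ Fintype.piFinset (fun i => ({X i, X i + 1} : Finset ℤ)),
          (Matrix.detRowAlternating (R := ℝ) (n := Fin N)).toMultilinearMap
            (fun i => fun k : Fin N => wgt N T S t X i (Y i) * ((Y i : ℝ)) ^ (k : ℕ)) :=
        Finset.sum_congr rfl fun Y _ => (hterm Y).symm
    _ = _ := key.symm

/-- P^{S,t}_{t+} is stochastic: each row sums to 1. -/
theorem Ptp_stochastic (N T S t : ℕ) (hN : 1 ≤ N) (hS : S ≤ T) (ht : t < T)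
    (X : Fin N → ℤ) (hX : X ∈ Xcal N T S t) :
    ∑ Y ∈ Xcal N T S (t + 1), Ptp N T S t X Y = 1 := by
  classical
  rw [Xcal, Finset.mem_filter, Fintype.mem_piFinset] at hX
  obtain ⟨hmem, hmono⟩ := hX
  have hb : ∀ i, 0 ≤ X i ∧ (t:ℤ) + S - T ≤ X i ∧ X i ≤ (t:ℤ) + N - 1 ∧
      X i ≤ (S:ℤ) + N - 1 := by
    intro i
    have h := hmem i
    rw [secX, Finset.mem_Icc] at h
    exact ⟨le_trans (le_max_left _ _) h.1, le_trans (le_max_right _ _) h.1,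
      le_trans h.2 (min_le_left _ _), le_trans h.2 (min_le_right _ _)⟩
  set E := Fintype.piFinset (fun i => ({X i, X i + 1} : Finset ℤ)) with hE
  have hEmem : ∀ Y : Fin N → ℤ, Y ∈ E ↔ ∀ i, Y i = X i ∨ Y i = X i + 1 := by
    intro Y; rw [hE, Fintype.mem_piFinset]; simp
  have hPtp : ∀ Y, Ptp N T S t X Y =
      if Y ∈ E then gfun N T S t X Y / (poch ((T:ℝ)-t) N * pairProd X) else 0 := by
    intro Y
    rw [Ptp]
    by_cases h : ∀ i, Y i = X i ∨ Y i = X i + 1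
    · rw [if_pos h, if_pos ((hEmem Y).mpr h)]; rfl
    · rw [if_neg h, if_neg (fun hc => h ((hEmem Y).mp hc))]
  rw [Finset.sum_congr rfl (fun Y _ => hPtp Y), Finset.sum_ite_mem]
  have hzero : ∀ Y ∈ E, Y ∉ Xcal N T S (t+1) ∩ E →
      gfun N T S t X Y / (poch ((T:ℝ)-t) N * pairProd X) = 0 := by
    intro Y hYE hYn
    rw [Finset.mem_inter, not_and_or] at hYn
    rcases hYn with hYn | hYn
    swap
    · exact absurd hYE hYn
    have hYX := (hEmem Y).mp hYE
    rw [Xcal, Finset.mem_filter, not_and_or] at hYn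
    have hg : gfun N T S t X Y = 0 := by
      rcases hYn with hYn | hYn
      · rw [Fintype.mem_piFinset] at hYn
        push_neg at hYn
        obtain ⟨i, hi⟩ := hYn
        rw [secX, Finset.mem_Icc, not_and_or] at hi
        obtain ⟨hb1, hb2, hb3, hb4⟩ := hb i
        have hYi := hYX i
        rw [gfun]
        rcases hi with hi | hi
        · simp only [max_le_iff, not_and_or, not_le] at hi
          have hXi : X i = (t:ℤ) + S - T ∧ Y i = X i := by
            push_cast at hi
            constructor <;> omega
          have hw : wgt N T S t X i (Y i) = 0 := by
            rw [wgt, if_neg (by omega : ¬ Y i = X i + 1)]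
            have : ((X i : ℤ) : ℝ) = (t:ℝ) + S - T := by
              rw [hXi.1]; push_cast; ring
            rw [this]; ring
          rw [Finset.prod_eq_zero (Finset.mem_univ i) hw, mul_zero]
        · simp only [le_min_iff, not_and_or, not_le] at hi
          have hXi : X i = (S:ℤ) + N - 1 ∧ Y i = X i + 1 := by
            push_cast at hi
            constructor <;> omega
          have hw : wgt N T S t X i (Y i) = 0 := by
            rw [wgt, if_pos hXi.2]
            have : ((X i : ℤ) : ℝ) = (S:ℝ) + N - 1 := by
              rw [hXi.1]; push_cast; ring
            rw [this]; ring
          rw [Finset.prod_eq_zero (Finset.mem_univ i) hw, mul_zero]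
      · push_neg at hYn
        obtain ⟨i, j, hij, hle⟩ := hYn
        have hXij := hmono i j hij
        have hYij : Y i = Y j := by
          have h1 := hYX i; have h2 := hYX j; omega
        rw [gfun, pairProd_zero hij hYij, zero_mul]
    rw [hg, zero_div]
  rw [Finset.sum_subset (Finset.inter_subset_right) hzero, ← Finset.sum_div, sum_E]
  have hdet : Matrix.det (Matrix.of fun i k : Fin N =>
        ((X i : ℝ) + ((T : ℝ) - t - S)) * (X i : ℝ) ^ (k : ℕ) +
          (((N : ℝ) + S - 1) - (X i : ℝ)) * ((X i : ℝ) + 1) ^ (k : ℕ))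
      = (∏ k ∈ range N, (((T:ℝ) - t - S) + ((N:ℝ) + S - 1) - k)) *
          ∏ i : Fin N, ∏ j ∈ Finset.Ioi i, ((X j : ℝ) - (X i : ℝ)) :=
    det_M N _ _ (fun i => (X i : ℝ))
  have hpoch : ∏ k ∈ range N, (((T:ℝ) - t - S) + ((N:ℝ) + S - 1) - k)
      = poch ((T:ℝ) - t) N := by
    rw [poch, ← Finset.prod_range_reflect (fun k => (T:ℝ) - t + k) N]
    refine Finset.prod_congr rfl fun k hk => ?_
    simp only [mem_range] at hk
    rw [Nat.cast_sub (by omega : k ≤ N - 1), Nat.cast_sub (by omega : 1 ≤ N)]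
    push_cast
    ring
  rw [hdet, hpoch, ← pairProd_eq]
  refine div_self (ne_of_gt (mul_pos ?_ (pairProd_pos hmono)))
  rw [poch]
  refine Finset.prod_pos fun k _ => ?_
  have hTt : (t:ℝ) < T := by exact_mod_cast ht
  have : (0:ℝ) ≤ k := Nat.cast_nonneg k
  linarith
end

section
/- The stochastic matrix P^{S,t}_{t+} admits the determinantal representation P^{S,t}_{t+}(X,Y) = [∏_{i<j}(y_j-y_i) · det[U^{S,t}_{t+}(x_i,y_j)]_{i,j=1..N}] / [(T-t)_N · ∏_{i<j}(x_j-x_i)], where U^{S,t}_{t+}(x,y) equals N+S-1-x if y=x+1, equals T-t-S+x if y=x, and 0 otherwise. -/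
open Finset

/-- The two-diagonal matrix U^{S,t}_{t+}. -/
noncomputable def Utp (N T S t : ℕ) (x y : ℤ) : ℝ :=
  if y = x + 1 then (N : ℝ) + S - 1 - x
  else if y = x then (T : ℝ) - t - S + x
  else 0

/-- A permutation compatible with the two-diagonal structure must be the identity. -/
lemma perm_eq_one_aux {N : ℕ} (X Y : Fin N → ℤ)
    (hx : ∀ i j : Fin N, i < j → X i < X j)
    (hy : ∀ i j : Fin N, i < j → Y i < Y j) (σ : Equiv.Perm (Fin N))
    (h : ∀ i, Y (σ i) = X i ∨ Y (σ i) = X i + 1) : σ = 1 := by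
  have hsm : StrictMono σ := by
    intro i j hij
    rcases lt_trichotomy (σ i) (σ j) with h1 | h1 | h1
    · exact h1
    · exact absurd (σ.injective h1) (ne_of_lt hij)
    · exfalso
      have h2 : Y (σ j) < Y (σ i) := hy _ _ h1
      have h3 : Y (σ i) ≤ X i + 1 := by rcases h i with h' | h' <;> omega
      have h4 : X j ≤ Y (σ j) := by rcases h j with h' | h' <;> omega
      have h5 : X i < X j := hx _ _ hij
      omega
  have wf : WellFoundedLT (Fin N) := inferInstance
  have hinv : StrictMono (σ⁻¹ : Equiv.Perm (Fin N)) := by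
    intro a b hab
    rcases lt_trichotomy (σ⁻¹ a) (σ⁻¹ b) with h1 | h1 | h1
    · exact h1
    · exact absurd ((σ⁻¹ : Equiv.Perm (Fin N)).injective h1) (ne_of_lt hab)
    · have h2 := hsm h1
      rw [Equiv.Perm.coe_inv, Equiv.apply_symm_apply, Equiv.apply_symm_apply] at h2
      exact absurd hab (not_lt_of_gt h2)
  ext i
  have h1 : i ≤ σ i := hsm.le_apply
  have h2 : σ i ≤ σ⁻¹ (σ i) := hinv.le_apply
  rw [Equiv.Perm.coe_inv, Equiv.symm_apply_apply] at h2
  have : σ i = i := le_antisymm h2 h1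
  simp [this]

theorem det_Utp {N T S t : ℕ} (X Y : Fin N → ℤ)
    (hx : ∀ i j : Fin N, i < j → X i < X j)
    (hy : ∀ i j : Fin N, i < j → Y i < Y j) :
    Matrix.det (Matrix.of fun i j : Fin N => Utp N T S t (X i) (Y j)) =
      ∏ i, Utp N T S t (X i) (Y i) := by
  rw [Matrix.det_apply]
  rw [Finset.sum_eq_single 1]
  · simp
  · intro σ _ hσ
    have hz : ∃ i, Utp N T S t (X (σ i)) (Y i) = 0 := by
      by_contra hc
      push_neg at hc
      apply hσ
      have h : ∀ i, Y i = X (σ i) ∨ Y i = X (σ i) + 1 := by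
        intro i
        have hi := hc i
        unfold Utp at hi
        by_cases h1 : Y i = X (σ i) + 1
        · right; exact h1
        by_cases h2 : Y i = X (σ i)
        · left; exact h2
        · simp [h1, h2] at hi
      have hinv : σ⁻¹ = 1 := by
        apply perm_eq_one_aux X Y hx hy σ⁻¹
        intro i
        have := h (σ⁻¹ i)
        simpa using this
      rw [← inv_inv σ, hinv, inv_one]
    obtain ⟨i, hi⟩ := hz
    rw [Finset.prod_eq_zero (Finset.mem_univ i) (by simpa using hi), smul_zero]
  · intro h; exact absurd (Finset.mem_univ _) h

/-- Determinantal representation of P^{S,t}_{t+}. -/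
theorem Ptp_det_rep (N T S t : ℕ) (hN : 1 ≤ N) (hS : S ≤ T) (ht : t < T)
    (X Y : Fin N → ℤ) (hX : X ∈ Xcal N T S t) (hY : Y ∈ Xcal N T S (t + 1)) :
    Ptp N T S t X Y =
      pairProd Y * Matrix.det (Matrix.of fun i j : Fin N => Utp N T S t (X i) (Y j)) /
        (poch ((T : ℝ) - t) N * pairProd X) := by
  have hxs : ∀ i j : Fin N, i < j → X i < X j := (Finset.mem_filter.mp hX).2
  have hys : ∀ i j : Fin N, i < j → Y i < Y j := (Finset.mem_filter.mp hY).2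
  rw [det_Utp X Y hxs hys]
  unfold Ptp
  by_cases h : ∀ i, Y i = X i ∨ Y i = X i + 1
  · rw [if_pos h]
    congr 2
    apply Finset.prod_congr rfl
    intro i _
    unfold Utp
    rcases h i with h' | h'
    · have h1 : Y i ≠ X i + 1 := by omega
      rw [if_neg h1, if_neg h1, if_pos h']
      push_cast
      ring
    · rw [if_pos h', if_pos h']
      push_cast
      ring
  · rw [if_neg h]
    push_neg at h
    obtain ⟨i, h1, h2⟩ := h
    rw [Finset.prod_eq_zero (Finset.mem_univ i) (by unfold Utp; rw [if_neg h2, if_neg h1])]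
    simp
end

section
/- Any square submatrix of a two-diagonal matrix (a matrix U with U(x,y) = 0 unless y = x or y = x+1) that has nonzero determinant is block-diagonal with each block triangular; consequently its determinant equals a product of suitable matrix entries. In particular, for x_1<⋯<x_N and y_1<⋯<y_N, det[U(x_i,y_j)]_{i,j=1..N} ≠ 0 implies y_i - x_i ∈ {0,1} for all i, and in that case det[U(x_i,y_j)] = ∏_{i=1}^N U(x_i,y_i). -/
/-- For a two-diagonal matrix U (vanishing off the diagonals y = x and y = x+1)
and strictly increasing tuples x₁<⋯<x_N, y₁<⋯<y_N: a nonzero determinant of the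
submatrix [U(xᵢ,yⱼ)] forces yᵢ - xᵢ ∈ {0,1} for all i, and in that case the
determinant is the product of the diagonal entries ∏ᵢ U(xᵢ,yᵢ). -/
theorem twoDiagonal_det (N : ℕ) (U : ℤ → ℤ → ℝ)
    (hU : ∀ x y : ℤ, y ≠ x → y ≠ x + 1 → U x y = 0)
    (x y : Fin N → ℤ)
    (hx : ∀ i j : Fin N, i < j → x i < x j)
    (hy : ∀ i j : Fin N, i < j → y i < y j) :
    (Matrix.det (Matrix.of fun i j : Fin N => U (x i) (y j)) ≠ 0 →
      ∀ i, y i = x i ∨ y i = x i + 1) ∧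
    ((∀ i, y i = x i ∨ y i = x i + 1) →
      Matrix.det (Matrix.of fun i j : Fin N => U (x i) (y j)) = ∏ i, U (x i) (y i)) := by
  -- Key lemma: any permutation all of whose factors are nonzero is the identity.
  have key : ∀ σ : Equiv.Perm (Fin N), (∀ i, U (x (σ i)) (y i) ≠ 0) → σ = 1 := by
    intro σ hσ
    have hc : ∀ i, y i = x (σ i) ∨ y i = x (σ i) + 1 := by
      intro i
      by_contra h
      push_neg at h
      exact hσ i (hU _ _ h.1 h.2)
    have hfix : ∀ n : ℕ, ∀ i : Fin N, i.val = n → σ i = i := by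
      intro n
      induction n using Nat.strong_induction_on with
      | _ n ih =>
        intro i hi
        by_contra hne
        have hlt : ∀ k : Fin N, k < i → σ k = k := by
          intro k hk
          exact ih k.val (hi ▸ hk) k rfl
        have hji : i < σ i := by
          rcases lt_trichotomy (σ i) i with h | h | h
          · have h2 : σ (σ i) = σ i := hlt _ h
            exact absurd (σ.injective h2) hne
          · exact absurd h hne
          · exact h
        have hki : i < σ⁻¹ i := by
          rcases lt_trichotomy (σ⁻¹ i) i with h | h | h
          · have h2 : σ (σ⁻¹ i) = σ⁻¹ i := hlt _ h
            rw [Equiv.Perm.coe_inv, Equiv.apply_symm_apply] at h2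
            exact absurd h2 (ne_of_gt h)
          · have : σ i = i := by
              conv_lhs => rw [← h]
              exact σ.apply_symm_apply i
            exact absurd this hne
          · exact h
        have e1 : x (σ i) ≤ y i := by rcases hc i with h | h <;> omega
        have e2 : y (σ⁻¹ i) ≤ x (σ (σ⁻¹ i)) + 1 := by
          rcases hc (σ⁻¹ i) with h | h <;> omega
        rw [show σ (σ⁻¹ i) = i from σ.apply_symm_apply i] at e2
        have e3 : x i < x (σ i) := hx i (σ i) hji
        have e4 : y i < y (σ⁻¹ i) := hy i (σ⁻¹ i) hki
        omega
    ext i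
    exact congrArg Fin.val (hfix i.val i rfl)
  -- The determinant equals the product of diagonal entries, unconditionally.
  have hdet : Matrix.det (Matrix.of fun i j : Fin N => U (x i) (y j))
      = ∏ i, U (x i) (y i) := by
    rw [Matrix.det_apply']
    rw [Finset.sum_eq_single (1 : Equiv.Perm (Fin N))]
    · simp
    · intro σ _ hσ1
      have : ∃ i, U (x (σ i)) (y i) = 0 := by
        by_contra h
        push_neg at h
        exact hσ1 (key σ h)
      obtain ⟨i, hi⟩ := this
      rw [Finset.prod_eq_zero (Finset.mem_univ i) (by simpa using hi), mul_zero]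
    · intro h
      exact absurd (Finset.mem_univ _) h
  constructor
  · intro hne i
    rw [hdet] at hne
    have := Finset.prod_ne_zero_iff.mp hne i (Finset.mem_univ i)
    by_contra h
    push_neg at h
    exact this (hU _ _ h.1 h.2)
  · intro _
    exact hdet
end

section
/- The stochastic matrices P^{S,t}_{t+} and P^{S,t}_{S-} commute: P^{S,t}_{t+} · P^{S,t+1}_{S-} = P^{S,t}_{S-} · P^{S-1,t}_{t+}, as equality of matrices on 𝒳^{S,t} × 𝒳^{S-1,t+1}. -/
open Finset

noncomputable def PSm (N T S t : ℕ) (X Y : Fin N → ℤ) : ℝ :=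
  if ∀ i, Y i = X i ∨ Y i = X i - 1 then
    (pairProd Y *
      ∏ i, (if Y i = X i - 1 then (X i : ℝ) else (S : ℝ) + N - 1 - X i)) /
      (poch (S : ℝ) N * pairProd X)
  else 0

namespace PC

def gridF (lo hi : ℕ → ℤ) (n : ℕ) : Finset (Fin n → ℤ) :=
  (Fintype.piFinset fun i : Fin n => ({lo i.1, hi i.1} : Finset ℤ)).filter
    fun Z => ∀ i j : Fin n, i < j → Z i < Z j

lemma grid_step (c : ℕ → ℤ → ℝ) (lo hi : ℕ → ℤ) (n : ℕ) (v : ℤ)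
    (hv : v = lo (n+1) ∨ v = hi (n+1)) :
    (∑ Z ∈ gridF lo hi (n+2), if Z (Fin.last (n+1)) = v then ∏ i, c i.1 (Z i) else 0)
      = c (n+1) v *
        ∑ Z ∈ gridF lo hi (n+1), if Z (Fin.last n) < v then ∏ i, c i.1 (Z i) else 0 := by
  rw [← Finset.sum_filter, ← Finset.sum_filter, Finset.mul_sum]
  refine Finset.sum_nbij' (fun Z => Z ∘ Fin.castSucc) (fun Z' => Fin.snoc Z' v)
    ?_ ?_ ?_ ?_ ?_
  · intro Z hZ
    simp only [mem_filter, gridF, Fintype.mem_piFinset, mem_insert, mem_singleton] at hZ ⊢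
    obtain ⟨⟨hpi, hinc⟩, hlast⟩ := hZ
    refine ⟨⟨fun i => ?_, fun i j hij => hinc _ _ (by simpa using hij)⟩, ?_⟩
    · simpa using hpi (Fin.castSucc i)
    · calc Z (Fin.castSucc (Fin.last n)) < Z (Fin.last (n+1)) :=
            hinc _ _ (Fin.castSucc_lt_last _)
        _ = v := hlast
  · intro Z' hZ'
    simp only [mem_filter, gridF, Fintype.mem_piFinset, mem_insert, mem_singleton] at hZ' ⊢
    obtain ⟨⟨hpi, hinc⟩, hlast⟩ := hZ'
    have hall : ∀ i : Fin (n+1), Z' i < v := by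
      intro i
      rcases eq_or_lt_of_le (Fin.le_last i) with h | h
      · rwa [h]
      · exact lt_trans (hinc _ _ h) hlast
    refine ⟨⟨fun i => ?_, fun i j hij => ?_⟩, by simp⟩
    · refine Fin.lastCases ?_ (fun k => ?_) i
      · simpa using hv
      · simpa using hpi k
    · by_cases hj : j = Fin.last (n+1)
      · subst hj
        rw [Fin.snoc_last]
        have hi : (i : ℕ) < n + 1 := by
          have h2 := hij
          rw [Fin.lt_def] at h2
          simp only [Fin.val_last] at h2
          exact h2
        have : i = Fin.castSucc ⟨i.1, hi⟩ := by ext; simp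
        rw [this, Fin.snoc_castSucc]
        exact hall _
      · have hj' : (j : ℕ) < n + 1 := by
          have := j.2
          have : (j : ℕ) ≠ n + 1 := fun h => hj (by ext; simp [h])
          omega
        have hi' : (i : ℕ) < n + 1 := lt_trans hij hj'
        have ei : i = Fin.castSucc ⟨i.1, hi'⟩ := by ext; simp
        have ej : j = Fin.castSucc ⟨j.1, hj'⟩ := by ext; simp
        rw [ei, ej, Fin.snoc_castSucc, Fin.snoc_castSucc]
        exact hinc _ _ (by simpa using hij)
  · intro Z hZ
    simp only [mem_filter] at hZ
    funext i
    refine Fin.lastCases ?_ (fun k => ?_) i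
    · simp [hZ.2.symm]
    · simp
  · intro Z' _
    funext i
    simp [Fin.snoc_castSucc]
  · intro Z hZ
    simp only [mem_filter] at hZ
    rw [Fin.prod_univ_castSucc, hZ.2, mul_comm]
    rfl




noncomputable def rec2 (a0 a1 : ℕ → ℝ) (g : ℕ → Bool) : ℕ → ℝ × ℝ
  | 0 => (1, 0)
  | n+1 => (a0 n * ((rec2 a0 a1 g n).1 + if g n then (rec2 a0 a1 g n).2 else 0),
            a1 n * ((rec2 a0 a1 g n).1 + (rec2 a0 a1 g n).2))

lemma rec2_succ (a0 a1 : ℕ → ℝ) (g : ℕ → Bool) (n : ℕ) :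
    rec2 a0 a1 g (n+1)
      = (a0 n * ((rec2 a0 a1 g n).1 + if g n then (rec2 a0 a1 g n).2 else 0),
         a1 n * ((rec2 a0 a1 g n).1 + (rec2 a0 a1 g n).2)) := rfl

variable (c : ℕ → ℤ → ℝ) (lo hi : ℕ → ℤ)

lemma mem_grid_last {n : ℕ} {Z : Fin (n+1) → ℤ} (hZ : Z ∈ gridF lo hi (n+1)) :
    Z (Fin.last n) = lo n ∨ Z (Fin.last n) = hi n := by
  simp only [gridF, mem_filter, Fintype.mem_piFinset, mem_insert, mem_singleton] at hZ
  simpa using hZ.1 (Fin.last n)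

lemma sum_lt_split (n : ℕ) (v : ℤ) (hne : lo n ≠ hi n) :
    (∑ Z ∈ gridF lo hi (n+1), if Z (Fin.last n) < v then ∏ i, c i.1 (Z i) else 0)
    = (if lo n < v then
        ∑ Z ∈ gridF lo hi (n+1), if Z (Fin.last n) = lo n then ∏ i, c i.1 (Z i) else 0
       else 0)
    + (if hi n < v then
        ∑ Z ∈ gridF lo hi (n+1), if Z (Fin.last n) = hi n then ∏ i, c i.1 (Z i) else 0
       else 0) := by
  have hterm : ∀ Z ∈ gridF lo hi (n+1),
      (if Z (Fin.last n) < v then ∏ i, c i.1 (Z i) else 0)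
      = (if lo n < v then (if Z (Fin.last n) = lo n then ∏ i, c i.1 (Z i) else 0) else 0)
      + (if hi n < v then (if Z (Fin.last n) = hi n then ∏ i, c i.1 (Z i) else 0) else 0) := by
    intro Z hZ
    rcases mem_grid_last lo hi hZ with h | h <;> rw [h] <;> split_ifs <;>
      simp_all <;> omega
  rw [Finset.sum_congr rfl hterm, Finset.sum_add_distrib]
  congr 1 <;> split_ifs <;> simp

lemma bridge' (hlh : ∀ i, lo i < hi i) (hll : ∀ i, lo i < lo (i+1))
    (hhh : ∀ i, hi i < hi (i+1)) :
    ∀ n,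
      ((∑ Z ∈ gridF lo hi (n+1), if Z (Fin.last n) = lo n then ∏ i, c i.1 (Z i) else 0)
        = (rec2 (fun m => c m (lo m)) (fun m => c m (hi m))
            (fun m => decide (hi (m-1) < lo m)) (n+1)).1)
      ∧ ((∑ Z ∈ gridF lo hi (n+1), if Z (Fin.last n) = hi n then ∏ i, c i.1 (Z i) else 0)
        = (rec2 (fun m => c m (lo m)) (fun m => c m (hi m))
            (fun m => decide (hi (m-1) < lo m)) (n+1)).2) := by
  intro n
  induction n with
  | zero =>
    have hset : gridF lo hi 1
        = ({(fun _ => lo 0 : Fin 1 → ℤ), (fun _ => hi 0)} : Finset (Fin 1 → ℤ)) := by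
      ext Z
      simp only [gridF, mem_filter, Fintype.mem_piFinset, mem_insert, mem_singleton]
      constructor
      · rintro ⟨hpi, _⟩
        rcases hpi 0 with h | h
        · left; funext i; rw [Subsingleton.elim i 0]; exact h
        · right; funext i; rw [Subsingleton.elim i 0]; exact h
      · rintro (rfl | rfl) <;>
          exact ⟨fun i => by rw [Subsingleton.elim i 0]; simp, fun i j hij => absurd hij (by omega)⟩
    have hne : (fun _ => lo 0 : Fin 1 → ℤ) ≠ (fun _ => hi 0) := by
      intro h
      exact absurd (congrFun h 0) (ne_of_lt (hlh 0))
    constructor <;>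
    · rw [hset, Finset.sum_pair hne]
      simp [rec2, Fin.prod_univ_one, ne_of_lt (hlh 0), (ne_of_lt (hlh 0)).symm]
  | succ n ih =>
    have hgs := grid_step c lo hi n
    constructor
    · rw [hgs (lo (n+1)) (Or.inl rfl),
        sum_lt_split c lo hi n (lo (n+1)) (ne_of_lt (hlh n)),
        if_pos (hll n), ih.1, ih.2, rec2_succ _ _ _ (n+1)]
      simp only [Nat.add_sub_cancel]
      by_cases hg : hi n < lo (n+1) <;> simp [hg]
    · rw [hgs (hi (n+1)) (Or.inr rfl),
        sum_lt_split c lo hi n (hi (n+1)) (ne_of_lt (hlh n)),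
        if_pos (lt_trans (hll n) (hlh (n+1))), if_pos (hhh n), ih.1, ih.2, rec2_succ _ _ _ (n+1)]

lemma bridge (hlh : ∀ i, lo i < hi i) (hll : ∀ i, lo i < lo (i+1))
    (hhh : ∀ i, hi i < hi (i+1)) (n : ℕ) :
    (∑ Z ∈ gridF lo hi n, ∏ i, c i.1 (Z i))
      = (rec2 (fun m => c m (lo m)) (fun m => c m (hi m))
          (fun m => decide (hi (m-1) < lo m)) n).1
      + (rec2 (fun m => c m (lo m)) (fun m => c m (hi m))
          (fun m => decide (hi (m-1) < lo m)) n).2 := by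
  cases n with
  | zero =>
    have hmem : (fun i : Fin 0 => i.elim0) ∈ gridF lo hi 0 := by
      simp only [gridF, mem_filter, Fintype.mem_piFinset]
      exact ⟨fun i => i.elim0, fun i j h => i.elim0⟩
    have hset : gridF lo hi 0 = {fun i : Fin 0 => i.elim0} := by
      apply Finset.eq_singleton_iff_unique_mem.mpr
      exact ⟨hmem, fun Z _ => funext fun i => i.elim0⟩
    rw [hset]
    simp only [Finset.sum_singleton, rec2]
    simp
  | succ n =>
    have hterm : ∀ Z ∈ gridF lo hi (n+1),
        (∏ i, c i.1 (Z i))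
        = (if Z (Fin.last n) = lo n then ∏ i, c i.1 (Z i) else 0)
        + (if Z (Fin.last n) = hi n then ∏ i, c i.1 (Z i) else 0) := by
      intro Z hZ
      rcases mem_grid_last lo hi hZ with h | h <;> rw [h] <;>
        simp [ne_of_lt (hlh n), (ne_of_lt (hlh n)).symm]
    rw [Finset.sum_congr rfl hterm, Finset.sum_add_distrib,
      (bridge' c lo hi hlh hll hhh n).1, (bridge' c lo hi hlh hll hhh n).2]

lemma rec2_sum_eq (a0 a1 b0 b1 : ℕ → ℝ) (g : ℕ → Bool)
    (hI : ∀ n, a0 n + a1 n = b0 n + b1 n)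
    (hII : ∀ n, g (n+1) = false → a1 n * a0 (n+1) = b1 n * b0 (n+1)) :
    ∀ n, (rec2 a0 a1 g n).1 + (rec2 a0 a1 g n).2
      = (rec2 b0 b1 g n).1 + (rec2 b0 b1 g n).2 := by
  have key : ∀ n, ((rec2 a0 a1 g n).1 + (rec2 a0 a1 g n).2
      = (rec2 b0 b1 g n).1 + (rec2 b0 b1 g n).2) ∧
      ((rec2 a0 a1 g (n+1)).1 + (rec2 a0 a1 g (n+1)).2
      = (rec2 b0 b1 g (n+1)).1 + (rec2 b0 b1 g (n+1)).2) := by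
    intro n
    induction n with
    | zero =>
      refine ⟨by simp [rec2], ?_⟩
      rw [rec2_succ, rec2_succ]
      simp only [rec2]
      cases h : g 0 <;> simp <;> linarith [hI 0]
    | succ n ih =>
      refine ⟨ih.2, ?_⟩
      have h1 := ih.1
      have h2 := ih.2
      rw [rec2_succ a0 a1 g (n+1), rec2_succ b0 b1 g (n+1)]
      have e1 : (rec2 a0 a1 g (n+1)).2
          = a1 n * ((rec2 a0 a1 g n).1 + (rec2 a0 a1 g n).2) := rfl
      have e2 : (rec2 b0 b1 g (n+1)).2
          = b1 n * ((rec2 b0 b1 g n).1 + (rec2 b0 b1 g n).2) := rfl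
      cases h : g (n+1) with
      | true =>
        simp only [h, if_true]
        linear_combination ((rec2 a0 a1 g (n+1)).1 + (rec2 a0 a1 g (n+1)).2) * hI (n+1)
          + (b0 (n+1) + b1 (n+1)) * h2
      | false =>
        simp only [h, Bool.false_eq_true, if_false]
        have h3 := hII n h
        linear_combination ((rec2 a0 a1 g (n+1)).1 + (rec2 a0 a1 g (n+1)).2) * hI (n+1)
          + (b0 (n+1) + b1 (n+1)) * h2 - a0 (n+1) * e1 + b0 (n+1) * e2
          - ((rec2 a0 a1 g n).1 + (rec2 a0 a1 g n).2) * h3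
          - (b1 n * b0 (n+1)) * h1
  exact fun n => (key n).1

noncomputable def fL (N T S t : ℕ) (x z : ℤ) : ℝ :=
  if z = x + 1 then (N:ℝ) + S - x - 1 else (x:ℝ) + T - t - S
noncomputable def gL (N S : ℕ) (y z : ℤ) : ℝ :=
  if y = z - 1 then (z:ℝ) else if y = z then (S:ℝ) + N - 1 - z else 0
noncomputable def fR (N S : ℕ) (x z : ℤ) : ℝ :=
  if z = x - 1 then (x:ℝ) else (S:ℝ) + N - 1 - x
noncomputable def gR (N T S t : ℕ) (y z : ℤ) : ℝ :=
  if y = z + 1 then (N:ℝ) + ((S-1 : ℕ):ℝ) - z - 1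
  else if y = z then (z:ℝ) + T - t - ((S-1:ℕ):ℝ) else 0

noncomputable def cL (N T S t : ℕ) (x y z : ℤ) : ℝ := fL N T S t x z * gL N S y z
noncomputable def cR (N T S t : ℕ) (x y z : ℤ) : ℝ := fR N S x z * gR N T S t y z

variable {N T S t : ℕ} {x y z : ℤ}

lemma fL_hi : fL N T S t x (x+1) = (N:ℝ) + S - x - 1 := if_pos rfl
lemma fL_lo : fL N T S t x x = (x:ℝ) + T - t - S := if_neg (by omega)
lemma fR_lo : fR N S x (x-1) = (x:ℝ) := if_pos rfl
lemma fR_hi : fR N S x x = (S:ℝ) + N - 1 - x := if_neg (by omega)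
lemma gL_m (h : y = z - 1) : gL N S y z = (z:ℝ) := if_pos h
lemma gL_e (h : y = z) : gL N S y z = (S:ℝ) + N - 1 - z := by
  rw [gL, if_neg (by omega), if_pos h]
lemma gL_0 (h1 : y ≠ z - 1) (h2 : y ≠ z) : gL N S y z = 0 := by
  rw [gL, if_neg h1, if_neg h2]
lemma gR_p (h : y = z + 1) : gR N T S t y z = (N:ℝ) + ((S-1 : ℕ):ℝ) - z - 1 := if_pos h
lemma gR_e (h : y = z) : gR N T S t y z = (z:ℝ) + T - t - ((S-1:ℕ):ℝ) := by
  rw [gR, if_neg (by omega), if_pos h]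
lemma gR_0 (h1 : y ≠ z + 1) (h2 : y ≠ z) : gR N T S t y z = 0 := by
  rw [gR, if_neg h1, if_neg h2]

lemma idI (N T S t : ℕ) (hS1 : 1 ≤ S) (x y : ℤ) :
    cL N T S t x y x + cL N T S t x y (x+1)
      = cR N T S t x y (x-1) + cR N T S t x y x := by
  have hc : ((S-1 : ℕ):ℝ) = (S:ℝ) - 1 := by rw [Nat.cast_sub hS1]; simp
  simp only [cL, cR, fL_hi, fL_lo, fR_lo, fR_hi]
  by_cases h1 : y = x
  · rw [gL_e h1, gL_m (by omega), gR_p (by omega), gR_e h1, hc]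
    push_cast; ring
  by_cases h2 : y = x + 1
  · rw [gL_0 (by omega) (by omega), gL_e h2, gR_0 (by omega) (by omega),
      gR_p h2, hc]
    push_cast; ring
  by_cases h3 : y = x - 1
  · rw [gL_m h3, gL_0 (by omega) (by omega), gR_e h3, gR_0 (by omega) (by omega), hc]
    push_cast; ring
  · rw [gL_0 (by omega) (by omega), gL_0 (by omega) (by omega),
      gR_0 (by omega) (by omega), gR_0 (by omega) (by omega)]
    ring

lemma idII (N T S t : ℕ) (hS1 : 1 ≤ S) (x y y' : ℤ) (hy : y < y') :
    cL N T S t x y (x+1) * cL N T S t (x+1) y' (x+1)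
      = cR N T S t x y x * cR N T S t (x+1) y' x := by
  have hc : ((S-1 : ℕ):ℝ) = (S:ℝ) - 1 := by rw [Nat.cast_sub hS1]; simp
  have e1 : cL N T S t (x+1) y' (x+1) = fL N T S t (x+1) (x+1) * gL N S y' (x+1) := rfl
  have e2 : cR N T S t (x+1) y' x = fR N S (x+1) x * gR N T S t y' x := rfl
  have e3 : fL N T S t (x+1) (x+1) = ((x+1 : ℤ):ℝ) + T - t - S := if_neg (by omega)
  have e4 : fR N S (x+1) x = ((x+1:ℤ):ℝ) := if_pos (by omega)
  simp only [cL, cR, e1, e2, e3, e4, fL_hi, fR_hi]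
  by_cases h1 : y = x
  · by_cases h2 : y' = x + 1
    · rw [gL_m (by omega), gL_e (by omega), gR_e h1, gR_p (by omega), hc]
      push_cast; ring
    · rw [gL_0 (show y' ≠ x+1-1 by omega) (show y' ≠ x+1 by omega),
        gR_0 (show y' ≠ x+1 by omega) (show y' ≠ x by omega)]
      ring
  · by_cases h3 : y = x + 1
    · -- y' ≥ x + 2 : second coordinate factors vanish
      rw [gL_0 (show y' ≠ x+1-1 by omega) (show y' ≠ x+1 by omega),
        gR_0 (show y' ≠ x+1 by omega) (show y' ≠ x by omega)]
      ring
    · rw [gL_0 (show y ≠ x+1-1 by omega) (show y ≠ x+1 by omega),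
        gR_0 (show y ≠ x+1 by omega) (show y ≠ x by omega)]
      ring

def extSeq (N : ℕ) (X : Fin N → ℤ) : ℕ → ℤ := fun n =>
  if h : n < N then X ⟨n, h⟩
  else (if h0 : 0 < N then X ⟨N-1, by omega⟩ else 0) + (n : ℤ) - N + 1

lemma extSeq_eq {N : ℕ} (X : Fin N → ℤ) (i : Fin N) : extSeq N X i.1 = X i := by
  simp [extSeq, i.2]

lemma extSeq_mono {N : ℕ} (X : Fin N → ℤ) (hN : 0 < N)
    (hm : ∀ i j : Fin N, i < j → X i < X j) :
    ∀ n, extSeq N X n < extSeq N X (n+1) := by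
  intro n
  unfold extSeq
  by_cases h1 : n + 1 < N
  · rw [dif_pos (by omega : n < N), dif_pos h1]
    exact hm _ _ (by simp [Fin.lt_def])
  · by_cases h2 : n < N
    · have hn : n = N - 1 := by omega
      rw [dif_pos h2, dif_neg h1, dif_pos hN]
      have : X ⟨n, h2⟩ = X ⟨N-1, by omega⟩ := by
        congr 1
        ext
        simp only [Fin.val_mk]
        omega
      rw [this]
      have : ((n+1 : ℕ) : ℤ) = (N : ℤ) := by omega
      omega
    · rw [dif_neg h2, dif_neg (by omega : ¬ n + 1 < N), dif_pos hN]
      have : ((n+1 : ℕ) : ℤ) = (n : ℤ) + 1 := by push_cast; ring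
      omega

lemma poch_pos (n : ℕ) {a : ℝ} (ha : 0 < a) : 0 < poch a n := by
  apply Finset.prod_pos
  intro k _
  have : (0:ℝ) ≤ (k:ℝ) := Nat.cast_nonneg k
  linarith

lemma pairProd_pos {N : ℕ} {f : Fin N → ℤ} (hm : ∀ i j : Fin N, i < j → f i < f j) :
    0 < pairProd f := by
  apply Finset.prod_pos
  intro p hp
  simp only [mem_filter, mem_univ, true_and] at hp
  have := hm _ _ hp
  exact_mod_cast (by omega : (0:ℤ) < f p.2 - f p.1)

lemma mem_Xcal {N T S t : ℕ} {Z : Fin N → ℤ} :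
    Z ∈ Xcal N T S t ↔ (∀ i, Z i ∈ secX N T S t) ∧ (∀ i j : Fin N, i < j → Z i < Z j) := by
  simp [Xcal, Fintype.mem_piFinset]

end PC

/-- Commutativity P^{S,t}_{t+} · P^{S,t+1}_{S-} = P^{S,t}_{S-} · P^{S-1,t}_{t+}
as matrices on 𝒳^{S,t} × 𝒳^{S-1,t+1}. -/
theorem P_commutation (N T S t : ℕ) (hN : 1 ≤ N) (hS1 : 1 ≤ S) (hS : S ≤ T) (ht : t < T)
    (X : Fin N → ℤ) (hX : X ∈ Xcal N T S t)
    (Y : Fin N → ℤ) (hY : Y ∈ Xcal N T (S - 1) (t + 1)) :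
    ∑ Z ∈ Xcal N T S (t + 1), Ptp N T S t X Z * PSm N T S (t + 1) Z Y =
      ∑ Z ∈ Xcal N T (S - 1) t, PSm N T S t X Z * Ptp N T (S - 1) t Z Y := by
  classical
  have hXu := PC.mem_Xcal.mp hX
  have hYu := PC.mem_Xcal.mp hY
  have hXm := hXu.2
  have hYm := hYu.2
  have hXb : ∀ i : Fin N, max 0 ((t:ℤ)+S-T) ≤ X i ∧ X i ≤ min ((t:ℤ)+N-1) ((S:ℤ)+N-1) :=
    fun i => by simpa [secX, Finset.mem_Icc] using hXu.1 i
  set x' := PC.extSeq N X with hx'def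
  set y' := PC.extSeq N Y with hy'def
  have hxm : ∀ n, x' n < x' (n+1) := PC.extSeq_mono X hN hXm
  have hym : ∀ n, y' n < y' (n+1) := PC.extSeq_mono Y hN hYm
  have hxe : ∀ i : Fin N, x' i.1 = X i := PC.extSeq_eq X
  have hye : ∀ i : Fin N, y' i.1 = Y i := PC.extSeq_eq Y
  have hpX : pairProd X ≠ 0 := ne_of_gt (PC.pairProd_pos hXm)
  have htR : (0:ℝ) < (T:ℝ) - t := by
    have : (t:ℝ) + 1 ≤ T := by exact_mod_cast ht
    linarith
  have hSR : (0:ℝ) < (S:ℝ) := by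
    have : (1:ℝ) ≤ S := by exact_mod_cast hS1
    linarith
  have hpo1 : poch ((T:ℝ) - t) N ≠ 0 := ne_of_gt (PC.poch_pos N htR)
  have hpo2 : poch (S:ℝ) N ≠ 0 := ne_of_gt (PC.poch_pos N hSR)
  set Gl := PC.gridF x' (fun m => x' m + 1) N with hGLdef
  set Gr := PC.gridF (fun m => x' m - 1) x' N with hGRdef
  have hGLmem : ∀ Z, Z ∈ Gl →
      (∀ i, Z i = X i ∨ Z i = X i + 1) ∧ (∀ i j : Fin N, i < j → Z i < Z j) := by
    intro Z hZ
    rw [hGLdef, PC.gridF, mem_filter, Fintype.mem_piFinset] at hZ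
    refine ⟨fun i => ?_, hZ.2⟩
    have := hZ.1 i
    simp only [mem_insert, mem_singleton] at this
    rw [hxe i] at this
    exact this
  have hGRmem : ∀ Z, Z ∈ Gr →
      (∀ i, Z i = X i ∨ Z i = X i - 1) ∧ (∀ i j : Fin N, i < j → Z i < Z j) := by
    intro Z hZ
    rw [hGRdef, PC.gridF, mem_filter, Fintype.mem_piFinset] at hZ
    refine ⟨fun i => ?_, hZ.2⟩
    have := hZ.1 i
    simp only [mem_insert, mem_singleton] at this
    rw [hxe i] at this
    exact this.symm
  -- ===== LHS restriction =====
  have hsupp1 : ∀ Z ∈ Xcal N T S (t+1), Z ∉ Gl →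
      Ptp N T S t X Z * PSm N T S (t+1) Z Y = 0 := by
    intro Z hZ hZG
    obtain ⟨hZbox, hZm⟩ := PC.mem_Xcal.mp hZ
    have hnc : ¬ ∀ i, Z i = X i ∨ Z i = X i + 1 := by
      intro hall
      apply hZG
      rw [hGLdef, PC.gridF, mem_filter, Fintype.mem_piFinset]
      refine ⟨fun i => ?_, hZm⟩
      simp only [mem_insert, mem_singleton]
      rw [hxe i]
      exact hall i
    rw [Ptp, if_neg hnc, zero_mul]
  have hsupp2 : ∀ Z ∈ Gl, Z ∉ Xcal N T S (t+1) →
      Ptp N T S t X Z * PSm N T S (t+1) Z Y = 0 := by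
    intro Z hZ hZX
    obtain ⟨hzv, hzm⟩ := hGLmem Z hZ
    have hbad : ∃ i : Fin N, Z i ∉ secX N T S (t+1) := by
      by_contra hno
      push_neg at hno
      exact hZX (PC.mem_Xcal.mpr ⟨hno, hzm⟩)
    obtain ⟨i, hib⟩ := hbad
    simp only [secX, Finset.mem_Icc] at hib
    have hkey : (Z i = X i ∧ X i = (t:ℤ) + S - T) ∨ (Z i = X i + 1 ∧ X i = (S:ℤ) + N - 1) := by
      have h1 := hXb i
      have h2 := hzv i
      omega
    rw [Ptp, if_pos hzv]
    have hzero : (∏ j, (if Z j = X j + 1 then (N:ℝ) + S - X j - 1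
        else (X j:ℝ) + T - t - S)) = 0 := by
      apply Finset.prod_eq_zero (Finset.mem_univ i)
      rcases hkey with ⟨h1, h2⟩ | ⟨h1, h2⟩
      · rw [if_neg (by omega), h2]; push_cast; ring
      · rw [if_pos h1, h2]; push_cast; ring
    rw [hzero, mul_zero, zero_div, zero_mul]
  have hL1 : (∑ Z ∈ Xcal N T S (t+1), Ptp N T S t X Z * PSm N T S (t+1) Z Y)
      = ∑ Z ∈ Gl, Ptp N T S t X Z * PSm N T S (t+1) Z Y := by
    calc (∑ Z ∈ Xcal N T S (t+1), Ptp N T S t X Z * PSm N T S (t+1) Z Y)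
        = ∑ Z ∈ Xcal N T S (t+1) ∩ Gl, Ptp N T S t X Z * PSm N T S (t+1) Z Y := by
          refine (Finset.sum_subset Finset.inter_subset_left fun Z hZ hZn => ?_).symm
          exact hsupp1 Z hZ fun hG => hZn (Finset.mem_inter.mpr ⟨hZ, hG⟩)
      _ = ∑ Z ∈ Gl, Ptp N T S t X Z * PSm N T S (t+1) Z Y := by
          refine Finset.sum_subset Finset.inter_subset_right fun Z hZ hZn => ?_
          exact hsupp2 Z hZ fun hXc => hZn (Finset.mem_inter.mpr ⟨hXc, hZ⟩)
  -- ===== LHS factorization =====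
  have hL2 : ∀ Z ∈ Gl, Ptp N T S t X Z * PSm N T S (t+1) Z Y
      = (pairProd Y / (poch ((T:ℝ)-t) N * poch (S:ℝ) N * pairProd X))
        * ∏ i, PC.cL N T S t (X i) (Y i) (Z i) := by
    intro Z hZ
    obtain ⟨hzv, hzm⟩ := hGLmem Z hZ
    have hpZ : pairProd Z ≠ 0 := ne_of_gt (PC.pairProd_pos hzm)
    rw [Ptp, if_pos hzv, PSm]
    by_cases hc : ∀ i, Y i = Z i ∨ Y i = Z i - 1
    · rw [if_pos hc]
      have hb : (∏ i, PC.cL N T S t (X i) (Y i) (Z i))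
          = (∏ i, (if Z i = X i + 1 then (N:ℝ) + S - X i - 1 else (X i:ℝ) + T - t - S))
            * ∏ i, (if Y i = Z i - 1 then ((Z i:ℤ):ℝ) else (S:ℝ) + N - 1 - Z i) := by
        rw [← Finset.prod_mul_distrib]
        refine Finset.prod_congr rfl fun i _ => ?_
        show PC.fL N T S t (X i) (Z i) * PC.gL N S (Y i) (Z i) = _
        rcases hc i with h | h
        · rw [PC.gL_e h, if_neg (show ¬(Y i = Z i - 1) from by omega)]
          simp only [PC.fL]
        · rw [PC.gL_m h, if_pos h]
          simp only [PC.fL]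
      rw [hb]
      field_simp
    · rw [if_neg hc, mul_zero]
      push_neg at hc
      obtain ⟨i, hi1, hi2⟩ := hc
      have hz0 : PC.cL N T S t (X i) (Y i) (Z i) = 0 := by
        show PC.fL N T S t (X i) (Z i) * PC.gL N S (Y i) (Z i) = 0
        rw [PC.gL_0 hi2 hi1, mul_zero]
      rw [Finset.prod_eq_zero (Finset.mem_univ i) hz0, mul_zero]
  -- ===== RHS restriction =====
  have hsupp1R : ∀ Z ∈ Xcal N T (S-1) t, Z ∉ Gr →
      PSm N T S t X Z * Ptp N T (S-1) t Z Y = 0 := by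
    intro Z hZ hZG
    obtain ⟨hZbox, hZm⟩ := PC.mem_Xcal.mp hZ
    have hnc : ¬ ∀ i, Z i = X i ∨ Z i = X i - 1 := by
      intro hall
      apply hZG
      rw [hGRdef, PC.gridF, mem_filter, Fintype.mem_piFinset]
      refine ⟨fun i => ?_, hZm⟩
      simp only [mem_insert, mem_singleton]
      rw [hxe i]
      exact (hall i).symm
    rw [PSm, if_neg hnc, zero_mul]
  have hsupp2R : ∀ Z ∈ Gr, Z ∉ Xcal N T (S-1) t →
      PSm N T S t X Z * Ptp N T (S-1) t Z Y = 0 := by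
    intro Z hZ hZX
    obtain ⟨hzv, hzm⟩ := hGRmem Z hZ
    have hbad : ∃ i : Fin N, Z i ∉ secX N T (S-1) t := by
      by_contra hno
      push_neg at hno
      exact hZX (PC.mem_Xcal.mpr ⟨hno, hzm⟩)
    obtain ⟨i, hib⟩ := hbad
    simp only [secX, Finset.mem_Icc] at hib
    have hkey : (Z i = X i - 1 ∧ X i = 0) ∨ (Z i = X i ∧ X i = (S:ℤ) + N - 1) := by
      have h1 := hXb i
      have h2 := hzv i
      omega
    rw [PSm, if_pos hzv]
    have hzero : (∏ j, (if Z j = X j - 1 then ((X j:ℤ):ℝ)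
        else (S:ℝ) + N - 1 - X j)) = 0 := by
      apply Finset.prod_eq_zero (Finset.mem_univ i)
      rcases hkey with ⟨h1, h2⟩ | ⟨h1, h2⟩
      · rw [if_pos h1, h2]; push_cast; ring
      · rw [if_neg (by omega), h2]; push_cast; ring
    rw [hzero, mul_zero, zero_div, zero_mul]
  have hR1 : (∑ Z ∈ Xcal N T (S-1) t, PSm N T S t X Z * Ptp N T (S-1) t Z Y)
      = ∑ Z ∈ Gr, PSm N T S t X Z * Ptp N T (S-1) t Z Y := by
    calc (∑ Z ∈ Xcal N T (S-1) t, PSm N T S t X Z * Ptp N T (S-1) t Z Y)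
        = ∑ Z ∈ Xcal N T (S-1) t ∩ Gr, PSm N T S t X Z * Ptp N T (S-1) t Z Y := by
          refine (Finset.sum_subset Finset.inter_subset_left fun Z hZ hZn => ?_).symm
          exact hsupp1R Z hZ fun hG => hZn (Finset.mem_inter.mpr ⟨hZ, hG⟩)
      _ = ∑ Z ∈ Gr, PSm N T S t X Z * Ptp N T (S-1) t Z Y := by
          refine Finset.sum_subset Finset.inter_subset_right fun Z hZ hZn => ?_
          exact hsupp2R Z hZ fun hXc => hZn (Finset.mem_inter.mpr ⟨hXc, hZ⟩)
  -- ===== RHS factorization =====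
  have hR2 : ∀ Z ∈ Gr, PSm N T S t X Z * Ptp N T (S-1) t Z Y
      = (pairProd Y / (poch ((T:ℝ)-t) N * poch (S:ℝ) N * pairProd X))
        * ∏ i, PC.cR N T S t (X i) (Y i) (Z i) := by
    intro Z hZ
    obtain ⟨hzv, hzm⟩ := hGRmem Z hZ
    have hpZ : pairProd Z ≠ 0 := ne_of_gt (PC.pairProd_pos hzm)
    rw [PSm, if_pos hzv, Ptp]
    by_cases hc : ∀ i, Y i = Z i ∨ Y i = Z i + 1
    · rw [if_pos hc]
      have hb : (∏ i, PC.cR N T S t (X i) (Y i) (Z i))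
          = (∏ i, (if Z i = X i - 1 then ((X i:ℤ):ℝ) else (S:ℝ) + N - 1 - X i))
            * ∏ i, (if Y i = Z i + 1 then (N:ℝ) + ((S-1:ℕ):ℝ) - Z i - 1
                else ((Z i:ℤ):ℝ) + T - t - ((S-1:ℕ):ℝ)) := by
        rw [← Finset.prod_mul_distrib]
        refine Finset.prod_congr rfl fun i _ => ?_
        show PC.fR N S (X i) (Z i) * PC.gR N T S t (Y i) (Z i) = _
        rcases hc i with h | h
        · rw [PC.gR_e h, if_neg (show ¬(Y i = Z i + 1) from by omega)]
          simp only [PC.fR]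
        · rw [PC.gR_p h, if_pos h]
          simp only [PC.fR]
      rw [hb]
      field_simp
    · rw [if_neg hc, mul_zero]
      push_neg at hc
      obtain ⟨i, hi1, hi2⟩ := hc
      have hz0 : PC.cR N T S t (X i) (Y i) (Z i) = 0 := by
        show PC.fR N S (X i) (Z i) * PC.gR N T S t (Y i) (Z i) = 0
        rw [PC.gR_0 hi2 hi1, mul_zero]
      rw [Finset.prod_eq_zero (Finset.mem_univ i) hz0, mul_zero]
  -- ===== bridges =====
  have hbridgeL := PC.bridge (fun m z => PC.cL N T S t (x' m) (y' m) z)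
    x' (fun m => x' m + 1) (fun i => by show x' i < x' i + 1; omega) hxm
    (fun i => by show x' i + 1 < x' (i+1) + 1; have := hxm i; omega) N
  have hbridgeR := PC.bridge (fun m z => PC.cR N T S t (x' m) (y' m) z)
    (fun m => x' m - 1) x' (fun i => by show x' i - 1 < x' i; omega)
    (fun i => by show x' i - 1 < x' (i+1) - 1; have := hxm i; omega) hxm N
  -- ===== gates coincide =====
  have hgate : (fun m => decide ((fun m => x' m + 1) (m-1) < x' m))
      = (fun m => decide (x' (m-1) < (fun m => x' m - 1) m)) := by
    funext m
    simp only [decide_eq_decide]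
    omega
  -- ===== comparison =====
  have hI : ∀ m, PC.cL N T S t (x' m) (y' m) (x' m) + PC.cL N T S t (x' m) (y' m) (x' m + 1)
      = PC.cR N T S t (x' m) (y' m) (x' m - 1) + PC.cR N T S t (x' m) (y' m) (x' m) :=
    fun m => PC.idI N T S t hS1 (x' m) (y' m)
  have hII : ∀ m, (fun m => decide ((fun m => x' m + 1) (m-1) < x' m)) (m+1) = false →
      PC.cL N T S t (x' m) (y' m) (x' m + 1)
        * PC.cL N T S t (x' (m+1)) (y' (m+1)) (x' (m+1))
      = PC.cR N T S t (x' m) (y' m) (x' m)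
        * PC.cR N T S t (x' (m+1)) (y' (m+1)) (x' (m+1) - 1) := by
    intro m hg
    simp only [Nat.add_sub_cancel, decide_eq_false_iff_not, not_lt] at hg
    have heq : x' (m+1) = x' m + 1 := by have := hxm m; omega
    rw [heq, show x' m + 1 - 1 = x' m from by ring]
    exact PC.idII N T S t hS1 (x' m) (y' m) (y' (m+1)) (hym m)
  have hcomp := PC.rec2_sum_eq
    (fun m => PC.cL N T S t (x' m) (y' m) (x' m))
    (fun m => PC.cL N T S t (x' m) (y' m) (x' m + 1))
    (fun m => PC.cR N T S t (x' m) (y' m) (x' m - 1))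
    (fun m => PC.cR N T S t (x' m) (y' m) (x' m))
    (fun m => decide ((fun m => x' m + 1) (m-1) < x' m)) hI hII N
  -- ===== assemble =====
  have hprodL : ∀ Z : Fin N → ℤ, (∏ i, PC.cL N T S t (X i) (Y i) (Z i))
      = ∏ i : Fin N, (fun m z => PC.cL N T S t (x' m) (y' m) z) i.1 (Z i) :=
    fun Z => Finset.prod_congr rfl fun i _ => by rw [← hxe i, ← hye i]
  have hprodR : ∀ Z : Fin N → ℤ, (∏ i, PC.cR N T S t (X i) (Y i) (Z i))
      = ∏ i : Fin N, (fun m z => PC.cR N T S t (x' m) (y' m) z) i.1 (Z i) :=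
    fun Z => Finset.prod_congr rfl fun i _ => by rw [← hxe i, ← hye i]
  rw [hL1, Finset.sum_congr rfl hL2, hR1, Finset.sum_congr rfl hR2,
    ← Finset.mul_sum, ← Finset.mul_sum]
  congr 1
  calc (∑ Z ∈ Gl, ∏ i, PC.cL N T S t (X i) (Y i) (Z i))
      = ∑ Z ∈ Gl, ∏ i : Fin N, (fun m z => PC.cL N T S t (x' m) (y' m) z) i.1 (Z i) :=
        Finset.sum_congr rfl fun Z _ => hprodL Z
    _ = ∑ Z ∈ Gr, ∏ i : Fin N, (fun m z => PC.cR N T S t (x' m) (y' m) z) i.1 (Z i) := by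
        rw [hbridgeL, hbridgeR, ← hgate]
        exact hcomp
    _ = ∑ Z ∈ Gr, ∏ i, PC.cR N T S t (X i) (Y i) (Z i) :=
        (Finset.sum_congr rfl fun Z _ => (hprodR Z).symm)
end

section
/- Within a (k,l)-block (indices i with x_i = y_i = k, k+1, …, k+l-1, isolated from other equal coordinates), the conditional law of the split point j (meaning z_i = x_i for the lowest j points of the block and z_i = x_i+1 for the remaining l-j points) under the S→S+1 update is exactly the distribution D(k+T-t-S-1, k+1, l): Prob{split at j} ∝ ∏_{a=k}^{k+j-1}(a+T-t-S-1) · ∏_{a=k+j}^{k+l-1}(a+1), i.e. ∝ (k+T-t-S-1)_j / (k+1)_j after dividing by the j-independent factor ∏_{a=k}^{k+l-1}(a+1). -/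
open Finset

/-- D(a,b,n){k} = [(a)_k/(b)_k] / Σ_{j=0}^n (a)_j/(b)_j. -/
noncomputable def D (a b : ℝ) (n k : ℕ) : ℝ :=
  (poch a k / poch b k) / ∑ j ∈ Finset.range (n + 1), poch a j / poch b j

/-- The weight of splitting a (k,l)-block at position j in the S→S+1 update:
∏_{a=k}^{k+j-1}(a+T-t-S-1) · ∏_{a=k+j}^{k+l-1}(a+1). -/
noncomputable def blockWeight (T t S k : ℕ) (l j : ℕ) : ℝ :=
  (∏ m ∈ Finset.range j, ((k : ℝ) + m + T - t - S - 1)) *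
    ∏ m ∈ Finset.Ico j l, ((k : ℝ) + m + 1)

lemma pochb_pos (k : ℕ) (j : ℕ) : 0 < poch ((k : ℝ) + 1) j := by
  apply Finset.prod_pos
  intro m _
  positivity

lemma weight_eq (T t S k l : ℕ) {j : ℕ} (hj : j ≤ l) :
    blockWeight T t S k l j =
      (poch ((k : ℝ) + T - t - S - 1) j / poch ((k : ℝ) + 1) j) *
        ∏ m ∈ Finset.range l, ((k : ℝ) + m + 1) := by
  have h1 : (∏ m ∈ Finset.range j, ((k : ℝ) + m + 1)) *
      ∏ m ∈ Finset.Ico j l, ((k : ℝ) + m + 1) =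
      ∏ m ∈ Finset.range l, ((k : ℝ) + m + 1) := by
    rw [Finset.range_eq_Ico, Finset.prod_Ico_consecutive _ (Nat.zero_le j) hj]
    rw [Finset.range_eq_Ico]
  have h2 : poch ((k : ℝ) + T - t - S - 1) j =
      ∏ m ∈ Finset.range j, ((k : ℝ) + m + T - t - S - 1) := by
    unfold poch; apply Finset.prod_congr rfl; intro m _; ring
  have h3 : poch ((k : ℝ) + 1) j = ∏ m ∈ Finset.range j, ((k : ℝ) + m + 1) := by
    unfold poch; apply Finset.prod_congr rfl; intro m _; ring
  have hb := pochb_pos k j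
  rw [blockWeight, h2, h3, div_mul_eq_mul_div, ← h1, eq_div_iff (by rw [h3] at hb; positivity)]
  ring

/-- The conditional law of the split point of a (k,l)-block is exactly
D(k+T-t-S-1, k+1, l): the weight factorizes as (a)_j/(b)_j times a j-independent
factor (with a = k+T-t-S-1, b = k+1), and the normalized weights coincide with D. -/
theorem block_split_law (T t S k l : ℕ)
    (ha : (0 : ℝ) < (k : ℝ) + T - t - S - 1) :
    ∀ j ≤ l,
      (blockWeight T t S k l j =
        (poch ((k : ℝ) + T - t - S - 1) j / poch ((k : ℝ) + 1) j) *
          ∏ m ∈ Finset.range l, ((k : ℝ) + m + 1)) ∧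
      (blockWeight T t S k l j / ∑ j' ∈ Finset.range (l + 1), blockWeight T t S k l j' =
        D ((k : ℝ) + T - t - S - 1) ((k : ℝ) + 1) l j) := by
  intro j hj
  refine ⟨weight_eq T t S k l hj, ?_⟩
  have hsum : ∑ j' ∈ Finset.range (l + 1), blockWeight T t S k l j' =
      (∑ j' ∈ Finset.range (l + 1),
        poch ((k : ℝ) + T - t - S - 1) j' / poch ((k : ℝ) + 1) j') *
        ∏ m ∈ Finset.range l, ((k : ℝ) + m + 1) := by
    rw [Finset.sum_mul]
    apply Finset.sum_congr rfl
    intro j' hj'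
    exact weight_eq T t S k l (Nat.lt_succ_iff.mp (Finset.mem_range.mp hj'))
  have hC : (0 : ℝ) < ∏ m ∈ Finset.range l, ((k : ℝ) + m + 1) := by
    apply Finset.prod_pos; intro m _; positivity
  rw [weight_eq T t S k l hj, hsum, D, mul_div_mul_right _ _ (ne_of_gt hC)]
end
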